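/- For the variable-step BDF2 kernels b^{(n)}_j (with b^{(n)}_0 = (1+2r_n)/(τ_n(1+r_n)), b^{(n)}_1 = −r_n²/(τ_n(1+r_n)), b^{(n)}_j = 0 for j ≥ 2, ratios r_k > 0, steps τ_k > 0), the DOC kernels θ^{(n)}_{n-j} satisfy: (a) θ^{(n)}_{n-j} > 0 for all 1 ≤ j ≤ n, and (b) ∑_{j=1}^n θ^{(n)}_{n-j} = τ_n for every n ≥ 1. -/

import Mathlib

open Finset

/-- For the variable-step BDF2 kernels, the DOC kernels are positive and
each row sums to the current step size `τ n` (Lemma 2.2). Here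
`b n j = b^{(n)}_{n-j}` and `θ n j = θ^{(n)}_{n-j}`. -/
theorem bdf2_doc_positive_row_sum (N : ℕ)
    (τ r : ℕ → ℝ) (hτ : ∀ k, 1 ≤ k → k ≤ N → 0 < τ k) (hr1 : r 1 = 0)
    (hr : ∀ k, 2 ≤ k → k ≤ N → 0 < r k ∧ τ k = r k * τ (k - 1))
    (b θ : ℕ → ℕ → ℝ)
    (hb0 : ∀ n, 1 ≤ n → n ≤ N → b n n = (1 + 2 * r n) / (τ n * (1 + r n)))
    (hb1 : ∀ n, 2 ≤ n → n ≤ N → b n (n - 1) = -(r n ^ 2) / (τ n * (1 + r n)))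
    (hb2 : ∀ n j, n ≤ N → 1 ≤ j → j + 2 ≤ n → b n j = 0)
    (hdoc : ∀ k n, 1 ≤ k → k ≤ n → n ≤ N →
      ∑ j ∈ Icc k n, θ n j * b j k = if n = k then 1 else 0) :
    (∀ j n, 1 ≤ j → j ≤ n → n ≤ N → 0 < θ n j) ∧
    (∀ n, 1 ≤ n → n ≤ N → ∑ j ∈ Icc 1 n, θ n j = τ n) := by
  -- r k ≥ 0 for 1 ≤ k ≤ N
  have hrnn : ∀ k, 1 ≤ k → k ≤ N → 0 ≤ r k := by
    intro k h1 h2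
    rcases eq_or_lt_of_le h1 with h | h
    · rw [← h, hr1]
    · exact le_of_lt (hr k h h2).1
  -- diagonal kernels are positive
  have hbkk : ∀ k, 1 ≤ k → k ≤ N → 0 < b k k := by
    intro k h1 h2
    rw [hb0 k h1 h2]
    have hτk := hτ k h1 h2
    have hrk := hrnn k h1 h2
    apply div_pos <;> nlinarith
  -- diagonal orthogonality
  have hθnn : ∀ n, 1 ≤ n → n ≤ N → θ n n * b n n = 1 := by
    intro n h1 h2
    have := hdoc n n h1 le_rfl h2
    simpa using this
  -- two-term recursion from orthogonality
  have hrec : ∀ k n, 1 ≤ k → k < n → n ≤ N →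
      θ n k * b k k + θ n (k + 1) * b (k + 1) k = 0 := by
    intro k n h1 hkn hN
    have hd := hdoc k n h1 (le_of_lt hkn) hN
    rw [if_neg (by omega)] at hd
    have hsplit : Icc k n = insert k (Icc (k + 1) n) := by
      ext x; simp only [Finset.mem_Icc, Finset.mem_insert]; omega
    have hsplit2 : Icc (k + 1) n = insert (k + 1) (Icc (k + 2) n) := by
      ext x; simp only [Finset.mem_Icc, Finset.mem_insert]; omega
    rw [hsplit, Finset.sum_insert (by simp), hsplit2,
      Finset.sum_insert (by simp)] at hd
    have hzero : ∑ j ∈ Icc (k + 2) n, θ n j * b j k = 0 := by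
      apply Finset.sum_eq_zero
      intro j hj
      rw [Finset.mem_Icc] at hj
      rw [hb2 j k (le_trans hj.2 hN) h1 hj.1, mul_zero]
    rw [hzero, add_zero] at hd
    linarith
  -- positivity
  have hpos : ∀ j n, 1 ≤ j → j ≤ n → n ≤ N → 0 < θ n j := by
    intro j n h1 hjn hnN
    obtain ⟨d, hd⟩ : ∃ d, j + d = n := ⟨n - j, by omega⟩
    induction d generalizing j with
    | zero =>
      have hj : j = n := by omega
      subst hj
      have h2 := hθnn j h1 hnN
      have h3 := hbkk j h1 hnN
      nlinarith
    | succ d ih =>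
      have hjn' : j < n := by omega
      have hθ1 : 0 < θ n (j + 1) := ih (j + 1) (by omega) (by omega) (by omega)
      have hR := hrec j n h1 hjn' hnN
      have hb1' : b (j + 1) j = -(r (j + 1) ^ 2) / (τ (j + 1) * (1 + r (j + 1))) := by
        have := hb1 (j + 1) (by omega) (by omega)
        simpa using this
      have hrj : 0 < r (j + 1) := (hr (j + 1) (by omega) (by omega)).1
      have hτj : 0 < τ (j + 1) := hτ (j + 1) (by omega) (by omega)
      have hbneg : b (j + 1) j < 0 := by
        rw [hb1']
        apply div_neg_of_neg_of_pos <;> nlinarith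
      have hbjj := hbkk j h1 (by omega)
      nlinarith [mul_pos hθ1 (neg_pos.mpr hbneg)]
  refine ⟨hpos, ?_⟩
  -- kernel identity : ∑_{k=1}^j b j k * τ k = 1
  have hker : ∀ j, 1 ≤ j → j ≤ N → ∑ k ∈ Icc 1 j, b j k * τ k = 1 := by
    intro j h1 hN
    rcases eq_or_lt_of_le h1 with h | h
    · rw [← h]
      simp only [Finset.Icc_self, Finset.sum_singleton]
      rw [hb0 1 le_rfl (by omega), hr1]
      have hτ1 := hτ 1 le_rfl (by omega)
      field_simp
      norm_num
    · -- j ≥ 2, write j = m + 2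
      obtain ⟨m, rfl⟩ : ∃ m, j = m + 2 := ⟨j - 2, by omega⟩
      rw [Finset.sum_Icc_succ_top (by omega), Finset.sum_Icc_succ_top (by omega)]
      have hzero : ∑ k ∈ Icc 1 m, b (m + 2) k * τ k = 0 := by
        apply Finset.sum_eq_zero
        intro k hk
        rw [Finset.mem_Icc] at hk
        rw [hb2 (m + 2) k hN hk.1 (by omega), zero_mul]
      rw [hzero, zero_add]
      have hb1' : b (m + 2) (m + 1) = -(r (m + 2) ^ 2) / (τ (m + 2) * (1 + r (m + 2))) := by
        have := hb1 (m + 2) (by omega) hN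
        simpa using this
      have hτrel : τ (m + 2) = r (m + 2) * τ (m + 1) := by
        have := (hr (m + 2) (by omega) hN).2
        simpa using this
      have hrpos : 0 < r (m + 2) := (hr (m + 2) (by omega) hN).1
      have hτ1 : 0 < τ (m + 1) := hτ (m + 1) (by omega) (by omega)
      have hτ2 : 0 < τ (m + 2) := hτ (m + 2) (by omega) hN
      rw [hb1', hb0 (m + 2) (by omega) hN]
      rw [hτrel]
      field_simp
      ring
  -- row sum
  intro n h1 hN
  have step1 : ∀ j ∈ Icc 1 n, θ n j = ∑ k ∈ Icc 1 j, θ n j * (b j k * τ k) := by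
    intro j hj
    rw [Finset.mem_Icc] at hj
    rw [← Finset.mul_sum, hker j hj.1 (le_trans hj.2 hN), mul_one]
  rw [Finset.sum_congr rfl step1]
  rw [Finset.sum_comm' (t' := Icc 1 n) (s' := fun k => Icc k n)
    (by intro x y; simp only [Finset.mem_Icc]; omega)]
  have step2 : ∀ k ∈ Icc 1 n,
      ∑ j ∈ Icc k n, θ n j * (b j k * τ k) = (if n = k then 1 else 0) * τ k := by
    intro k hk
    rw [Finset.mem_Icc] at hk
    calc ∑ j ∈ Icc k n, θ n j * (b j k * τ k)
        = (∑ j ∈ Icc k n, θ n j * b j k) * τ k := by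
          rw [Finset.sum_mul]; congr 1; ext j; ring
      _ = (if n = k then 1 else 0) * τ k := by rw [hdoc k n hk.1 hk.2 hN]
  rw [Finset.sum_congr rfl step2]
  simp only [ite_mul, one_mul, zero_mul]
  rw [Finset.sum_ite_eq (Icc 1 n) n τ, if_pos (by simp [Finset.mem_Icc]; omega)]
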